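/- Let N1 and N2 be S-DAGs such that neither contains two distinct equivalent nodes. Then the multisets of equivalence classes of nodes of N1 and N2 coincide if and only if N1 and N2 are isomorphic as S-DAGs (via a label-preserving directed graph isomorphism). -/

import Mathlib

open scoped Classical

/-- A finite directed acyclic graph whose leaves are (injectively) labeled in `S`. -/
structure LDag (S : Type) : Type 1 where
  V : Type
  fin : Fintype V
  adj : V → V → Prop
  acyclic : WellFounded (fun a b => adj b a)
  lab : V → S
  labInj : ∀ u v : V, (∀ w, ¬ adj u w) → (∀ w, ¬ adj v w) → lab u = lab v → u = v

attribute [instance] LDag.fin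

namespace LDag

variable {S : Type}

/-- A leaf is a node with no children. -/
def IsLeaf (N : LDag S) (v : N.V) : Prop := ∀ w, ¬ N.adj v w

/-- `v` is a descendant of `u` (every node is a descendant of itself). -/
def Desc (N : LDag S) (u v : N.V) : Prop := Relation.ReflTransGen N.adj u v

/-- The cluster of `u`: the set of labels of the leaves that are descendants of `u`. -/
def cluster (N : LDag S) (u : N.V) : Set S :=
  {s | ∃ v, N.Desc u v ∧ N.IsLeaf v ∧ N.lab v = s}

/-- A tree node: a node with at most one parent. -/
def TreeNode (N : LDag S) (v : N.V) : Prop :=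
  ∀ p q, N.adj p v → N.adj q v → p = q

/-- A root: a node with no parents. -/
def IsRoot (N : LDag S) (r : N.V) : Prop := ∀ u, ¬ N.adj u r

/-- Tree-child: every internal node has a child that is a tree node. -/
def TreeChild (N : LDag S) : Prop :=
  ∀ v, ¬ N.IsLeaf v → ∃ w, N.adj v w ∧ N.TreeNode w

/-- `PathN N u v k`: there is a directed path of length `k` from `u` to `v`. -/
inductive PathN (N : LDag S) : N.V → N.V → ℕ → Prop
  | refl (v : N.V) : PathN N v v 0
  | cons {u v w : N.V} {k : ℕ} : N.adj u v → PathN N v w k → PathN N u w (k + 1)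

/-- The height of a node: the largest length of a directed path from it to a leaf. -/
noncomputable def height (N : LDag S) (v : N.V) : ℕ :=
  sSup {k | ∃ s, N.IsLeaf s ∧ PathN N v s k}

/-- Node equivalence between (possibly equal) labeled DAGs, defined recursively:
two leaves with the same label are equivalent, and two internal nodes are equivalent
when their children can be matched into equivalent pairs. -/
noncomputable def equivTo (N1 N2 : LDag S) : N1.V → N2.V → Prop :=
  N1.acyclic.fix (fun u ih v =>
    (N1.IsLeaf u ∧ N2.IsLeaf v ∧ N1.lab u = N2.lab v) ∨
    (¬ N1.IsLeaf u ∧ ¬ N2.IsLeaf v ∧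
      ∃ f : {w // N1.adj u w} ≃ {w // N2.adj v w},
        ∀ w : {w // N1.adj u w}, ih w.1 w.2 (f w).1))

end LDag

/-- Pre-nested labels: finitely branching trees of labels (multisets are obtained
as a quotient by `NEq` below). -/
inductive PreNested (S : Type) : Type
  | leaf : S → PreNested S
  | node : List (PreNested S) → PreNested S

/-- Equality of pre-nested labels as nested multisets. -/
inductive NEq {S : Type} : PreNested S → PreNested S → Prop
  | leaf (a : S) : NEq (.leaf a) (.leaf a)
  | node {l m : List (PreNested S)} : List.Forall₂ NEq l m → NEq (.node l) (.node m)
  | perm {l m : List (PreNested S)} : l.Perm m → NEq (.node l) (.node m)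
  | symm {a b : PreNested S} : NEq a b → NEq b a
  | trans {a b c : PreNested S} : NEq a b → NEq b c → NEq a c

mutual
  theorem NEq.refl {S : Type} : ∀ a : PreNested S, NEq a a
    | .leaf s => .leaf s
    | .node l => .node (NEq.reflL l)
  theorem NEq.reflL {S : Type} : ∀ l : List (PreNested S), List.Forall₂ NEq l l
    | [] => .nil
    | a :: l => .cons (NEq.refl a) (NEq.reflL l)
end

instance PreNested.setoid (S : Type) : Setoid (PreNested S) :=
  ⟨NEq, ⟨NEq.refl, fun h => h.symm, fun h1 h2 => h1.trans h2⟩⟩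

/-- Nested multisets (of multisets of ...) of labels. -/
def Nested (S : Type) : Type := Quotient (PreNested.setoid S)

/-- `TaxaIn s p`: the taxon `s` occurs somewhere (at any nesting depth) in `p`. -/
inductive TaxaIn {S : Type} : S → PreNested S → Prop
  | leaf (s : S) : TaxaIn s (.leaf s)
  | node {s : S} {p : PreNested S} {l : List (PreNested S)} :
      p ∈ l → TaxaIn s p → TaxaIn s (.node l)

mutual
  /-- Nesting depth of a pre-nested label: a singleton `{s}` has depth 1. -/
  def depthP {S : Type} : PreNested S → ℕ
    | .leaf _ => 1
    | .node l => depthL l + 1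
  def depthL {S : Type} : List (PreNested S) → ℕ
    | [] => 0
    | p :: ps => max (depthP p) (depthL ps)
end

namespace LDag

variable {S : Type}

/-- The nested label of a node: the singleton of its label for a leaf, and the
multiset of the nested labels of its children otherwise. -/
noncomputable def nested (N : LDag S) : N.V → Nested S :=
  N.acyclic.fix (fun v ih =>
    if h : N.IsLeaf v then (⟦PreNested.leaf (N.lab v)⟧ : Nested S)
    else ⟦PreNested.node (((Finset.univ.filter (fun w => N.adj v w)).attach.toList).map
        (fun w => (ih w.1 (Finset.mem_filter.mp w.2).2).out))⟧)

/-- `Υ(N)`: the multiset of equivalence classes (= nested labels) of the nodes of `N`,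
with multiplicities. -/
noncomputable def UpsilonM (N : LDag S) : Multiset (Nested S) :=
  Finset.univ.val.map N.nested

/-- Label-preserving isomorphisms of labeled DAGs. -/
structure Iso (N1 N2 : LDag S) where
  toEquiv : N1.V ≃ N2.V
  adj_iff : ∀ u v : N1.V, N2.adj (toEquiv u) (toEquiv v) ↔ N1.adj u v
  lab_leaf : ∀ v : N1.V, N1.IsLeaf v → N2.lab (toEquiv v) = N1.lab v

def IsIso (N1 N2 : LDag S) : Prop := Nonempty (Iso N1 N2)

theorem Iso.leaf_map {N1 N2 : LDag S} (e : Iso N1 N2) {v : N1.V} (h : N1.IsLeaf v) :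
    N2.IsLeaf (e.toEquiv v) := by
  intro w hw
  have hw' : N2.adj (e.toEquiv v) (e.toEquiv (e.toEquiv.symm w)) := by simpa using hw
  exact h _ ((e.adj_iff _ _).mp hw')

def Iso.refl (N : LDag S) : Iso N N :=
  ⟨Equiv.refl _, fun _ _ => Iff.rfl, fun _ _ => rfl⟩

def Iso.symm {N1 N2 : LDag S} (e : Iso N1 N2) : Iso N2 N1 where
  toEquiv := e.toEquiv.symm
  adj_iff u v := by rw [← e.adj_iff]; simp
  lab_leaf v hv := by
    have h1 : N1.IsLeaf (e.toEquiv.symm v) := by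
      intro w hw
      have : N2.adj v (e.toEquiv w) := by
        have := (e.adj_iff (e.toEquiv.symm v) w).mpr hw
        simpa using this
      exact hv _ this
    have := e.lab_leaf _ h1
    simpa using this.symm

def Iso.trans {N1 N2 N3 : LDag S} (e : Iso N1 N2) (f : Iso N2 N3) : Iso N1 N3 where
  toEquiv := e.toEquiv.trans f.toEquiv
  adj_iff u v := by
    simp only [Equiv.trans_apply]
    rw [f.adj_iff, e.adj_iff]
  lab_leaf v hv := by
    simp only [Equiv.trans_apply]
    rw [f.lab_leaf _ (e.leaf_map hv), e.lab_leaf _ hv]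

instance isoSetoid (S : Type) : Setoid (LDag S) :=
  ⟨IsIso, ⟨fun N => ⟨Iso.refl N⟩, fun ⟨e⟩ => ⟨e.symm⟩, fun ⟨e⟩ ⟨f⟩ => ⟨e.trans f⟩⟩⟩

/-- Isomorphism classes of labeled DAGs. -/
def IsoClass (S : Type) : Type 1 := Quotient (isoSetoid S)

/-- The rooted subnetwork `N(u)` generated by a node `u`: the induced subgraph on
the set of descendants of `u`. -/
noncomputable def subnet (N : LDag S) (u : N.V) : LDag S where
  V := {v // N.Desc u v}
  fin := Subtype.fintype _
  adj a b := N.adj a.1 b.1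
  acyclic := by
    have h : (fun (a b : {v // N.Desc u v}) => N.adj b.1 a.1) =
        InvImage (fun a b => N.adj b a) Subtype.val := rfl
    rw [h]
    exact InvImage.wf _ N.acyclic
  lab v := N.lab v.1
  labInj := by
    intro a b ha hb hlab
    apply Subtype.ext
    refine N.labInj a.1 b.1 ?_ ?_ hlab
    · intro w hw
      exact ha ⟨w, a.2.trans (Relation.ReflTransGen.single hw)⟩ hw
    · intro w hw
      exact hb ⟨w, b.2.trans (Relation.ReflTransGen.single hw)⟩ hw

/-- `Σ(N)`: the multiset of isomorphism classes of the rooted subnetworks generated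
by the nodes of `N`, with multiplicities. -/
noncomputable def SigmaM (N : LDag S) : Multiset (IsoClass S) :=
  Finset.univ.val.map (fun u => (Quotient.mk (isoSetoid S) (N.subnet u) : IsoClass S))

/-- Nakhleh's dissimilarity `m(N1,N2) = |Υ(N1) △ Υ(N2)| / 2`. -/
noncomputable def mDist (N1 N2 : LDag S) : ℝ :=
  (((N1.UpsilonM - N2.UpsilonM) + (N2.UpsilonM - N1.UpsilonM)).card : ℝ) / 2

/-- The distance `σ(N1,N2) = |Σ(N1) △ Σ(N2)| / 2`. -/
noncomputable def sigmaDist (N1 N2 : LDag S) : ℝ :=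
  (((N1.SigmaM - N2.SigmaM) + (N2.SigmaM - N1.SigmaM)).card : ℝ) / 2

end LDag

/-- An `S`-DAG: a labeled DAG whose leaves are bijectively labeled by `S`. -/
structure SDag (S : Type) extends LDag S where
  surjLab : ∀ s : S, ∃ v, toLDag.IsLeaf v ∧ toLDag.lab v = s

/-- A phylogenetic network on `S`: a rooted `S`-DAG. -/
structure PhyloNetwork (S : Type) extends SDag S where
  rooted : ∃! r, toLDag.IsRoot r


section AuxProof

variable {S : Type}

instance : IsTrans (PreNested S) NEq := ⟨fun _ _ _ => NEq.trans⟩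

theorem rel_neq_symm {s t : Multiset (PreNested S)} (h : Multiset.Rel NEq s t) :
    Multiset.Rel NEq t s :=
  Multiset.rel_flip.mp (h.mono fun _ _ _ _ h => NEq.symm h)

/-- Shape characterization of `NEq`. -/
def NEqShape : PreNested S → PreNested S → Prop
  | .leaf a, .leaf b => a = b
  | .node l, .node m => Multiset.Rel NEq (l : Multiset (PreNested S)) (m : Multiset (PreNested S))
  | _, _ => False

theorem neq_shape {a b : PreNested S} (h : NEq a b) : NEqShape a b := by
  refine NEq.rec (motive_1 := fun a b _ => NEqShape a b)
    (motive_2 := fun l m _ =>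
      Multiset.Rel NEq (l : Multiset (PreNested S)) (m : Multiset (PreNested S)))
    ?_ ?_ ?_ ?_ ?_ ?_ ?_ h
  · intro a; exact rfl
  · intro l m _ ih; exact ih
  · intro l m hp
    show Multiset.Rel NEq (l : Multiset (PreNested S)) (m : Multiset (PreNested S))
    rw [Multiset.coe_eq_coe.mpr hp]
    exact Multiset.rel_refl_of_refl_on fun x _ => NEq.refl x
  · intro a b hab ih
    match a, b, ih with
    | .leaf _, .leaf _, ih => exact ih.symm
    | .node _, .node _, ih => exact rel_neq_symm ih
    | .leaf _, .node _, ih => exact ih.elim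
    | .node _, .leaf _, ih => exact ih.elim
  · intro a b c h1 h2 ih1 ih2
    match a, b, c, ih1, ih2 with
    | .leaf _, .leaf _, .leaf _, ih1, ih2 => exact ih1.trans ih2
    | .node _, .node _, .node _, ih1, ih2 => exact Multiset.Rel.trans _ ih1 ih2
    | .leaf _, .node _, _, ih1, _ => exact ih1.elim
    | .node _, .leaf _, _, ih1, _ => exact ih1.elim
    | .leaf _, .leaf _, .node _, _, ih2 => exact ih2.elim
    | .node _, .node _, .leaf _, _, ih2 => exact ih2.elim
  · exact Multiset.Rel.zero
  · intro a b l1 l2 hab _ _ ih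
    rw [← Multiset.cons_coe, ← Multiset.cons_coe]
    exact Multiset.Rel.cons hab ih

theorem neq_leaf_leaf {a b : S} (h : NEq (.leaf a) (.leaf b)) : a = b := neq_shape h

theorem neq_leaf_node {a : S} {l : List (PreNested S)}
    (h : NEq (.leaf a) (.node l)) : False := neq_shape h

theorem neq_node_node {l m : List (PreNested S)} (h : NEq (.node l) (.node m)) :
    Multiset.Rel NEq (l : Multiset (PreNested S)) (m : Multiset (PreNested S)) := neq_shape h

theorem relCoe_exists {α β : Type*} {r : α → β → Prop} (m : List β) :
    ∀ l : List α, Multiset.Rel r (l : Multiset α) (m : Multiset β) →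
      ∃ l', l.Perm l' ∧ List.Forall₂ r l' m := by
  induction m with
  | nil =>
    intro l h
    have h0 : (l : Multiset α) = 0 := Multiset.rel_zero_right.mp h
    have hl : l = [] := by simpa using h0
    exact ⟨[], by simp [hl], by simp [hl]⟩
  | cons b m ih =>
    intro l h
    rw [show ((↑(b :: m)) : Multiset β) = b ::ₘ (m : Multiset β) from rfl] at h
    obtain ⟨a, as, hab, has, hl⟩ := Multiset.rel_cons_right.mp h
    have ha : a ∈ l := by
      rw [← Multiset.mem_coe, hl]; exact Multiset.mem_cons_self _ _
    have hase : as = (l.erase a : Multiset α) := by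
      have h2 := congrArg (fun s => Multiset.erase s a) hl
      simpa [Multiset.coe_erase] using h2.symm
    rw [hase] at has
    obtain ⟨l'', hperm, hf⟩ := ih _ has
    exact ⟨a :: l'', (List.perm_cons_erase ha).trans (hperm.cons a), .cons hab hf⟩

theorem neq_node_of_rel {l m : List (PreNested S)}
    (h : Multiset.Rel NEq (l : Multiset (PreNested S)) (m : Multiset (PreNested S))) :
    NEq (.node l) (.node m) := by
  obtain ⟨l', hp, hf⟩ := relCoe_exists m l h
  exact (NEq.perm hp).trans (NEq.node hf)

theorem quot_node_eq_iff {l m : List (PreNested S)} :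
    (⟦PreNested.node l⟧ : Nested S) = ⟦PreNested.node m⟧ ↔
      Multiset.Rel NEq (l : Multiset (PreNested S)) (m : Multiset (PreNested S)) :=
  ⟨fun h => neq_node_node (Quotient.exact h), fun h => Quotient.sound (neq_node_of_rel h)⟩

theorem quot_leaf_eq_iff {a b : S} :
    (⟦PreNested.leaf a⟧ : Nested S) = ⟦PreNested.leaf b⟧ ↔ a = b :=
  ⟨fun h => neq_leaf_leaf (Quotient.exact h), fun h => h ▸ rfl⟩

theorem quot_leaf_ne_node {a : S} {l : List (PreNested S)} :
    (⟦PreNested.leaf a⟧ : Nested S) ≠ ⟦PreNested.node l⟧ :=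
  fun h => neq_leaf_node (Quotient.exact h)

theorem neq_out_iff {x y : Nested S} : NEq x.out y.out ↔ x = y := by
  constructor
  · intro h
    rw [← Quotient.out_eq x, ← Quotient.out_eq y]
    exact Quotient.sound h
  · rintro rfl; exact NEq.refl _

theorem rel_univ_of_equiv {α β : Type*} [Fintype α] [Fintype β] (e : α ≃ β)
    {r : α → β → Prop} (h : ∀ a, r a (e a)) :
    Multiset.Rel r (Finset.univ : Finset α).val (Finset.univ : Finset β).val := by
  rw [← Multiset.map_univ_val_equiv e]
  exact Multiset.rel_map_right.mpr (Multiset.rel_refl_of_refl_on fun x _ => h x)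

theorem equiv_of_rel {α β : Type*} [Fintype α] [Fintype β] {r : α → β → Prop}
    (h : Multiset.Rel r (Finset.univ : Finset α).val (Finset.univ : Finset β).val)
    (hl : ∀ a a' b, r a b → r a' b → a = a')
    (hr : ∀ a b b', r a b → r a b' → b = b') :
    ∃ e : α ≃ β, ∀ a, r a (e a) := by
  have hex : ∀ a : α, ∃ b, r a b := fun a => by
    obtain ⟨b, _, hb⟩ := Multiset.exists_mem_of_rel_of_mem h (Finset.mem_univ a)
    exact ⟨b, hb⟩
  choose F hF using hex
  have hFinj : Function.Injective F := fun a a' hE =>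
    hl a a' (F a') (hE ▸ hF a) (hF a')
  have hFsurj : Function.Surjective F := by
    intro b
    have h' : Multiset.Rel (flip r) (Finset.univ : Finset β).val
        (Finset.univ : Finset α).val := Multiset.rel_flip.mpr h
    obtain ⟨a, _, ha⟩ := Multiset.exists_mem_of_rel_of_mem h' (Finset.mem_univ b)
    exact ⟨a, hr a (F a) b (hF a) ha⟩
  exact ⟨Equiv.ofBijective F ⟨hFinj, hFsurj⟩, fun a => hF a⟩

namespace LDag

theorem equivTo_def (N1 N2 : LDag S) (u : N1.V) (v : N2.V) :
    N1.equivTo N2 u v ↔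
      ((N1.IsLeaf u ∧ N2.IsLeaf v ∧ N1.lab u = N2.lab v) ∨
       (¬ N1.IsLeaf u ∧ ¬ N2.IsLeaf v ∧
         ∃ f : {w // N1.adj u w} ≃ {w // N2.adj v w},
           ∀ w : {w // N1.adj u w}, N1.equivTo N2 w.1 (f w).1)) := by
  unfold LDag.equivTo
  rw [WellFounded.fix_eq]

theorem nested_def (N : LDag S) (v : N.V) :
    N.nested v = if _ : N.IsLeaf v then (⟦PreNested.leaf (N.lab v)⟧ : Nested S)
      else ⟦PreNested.node (((Finset.univ.filter (fun w => N.adj v w)).attach.toList).map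
        (fun w => (N.nested w.1).out))⟧ := by
  conv_lhs => rw [LDag.nested]
  rw [WellFounded.fix_eq]
  rfl

/-- The children finset of a node. -/
noncomputable def ch (N : LDag S) (v : N.V) : Finset N.V :=
  Finset.univ.filter (fun w => N.adj v w)

theorem mem_ch {N : LDag S} {v w : N.V} : w ∈ N.ch v ↔ N.adj v w := by
  simp [LDag.ch]

theorem nested_coe_list (N : LDag S) (v : N.V) :
    ((((Finset.univ.filter (fun w => N.adj v w)).attach.toList).map
        (fun w => (N.nested w.1).out)) : Multiset (PreNested S)) =
      (Finset.univ : Finset {x // x ∈ N.ch v}).val.map (fun w => (N.nested w.1).out) := by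
  rw [← Multiset.map_coe, Finset.coe_toList, Finset.univ_eq_attach]
  rfl

theorem nested_node_eq_iff {N1 N2 : LDag S} {u : N1.V} {v : N2.V}
    (hu : ¬ N1.IsLeaf u) (hv : ¬ N2.IsLeaf v) :
    N1.nested u = N2.nested v ↔
      Multiset.Rel (fun (x : {x // x ∈ N1.ch u}) (y : {y // y ∈ N2.ch v}) =>
          N1.nested x.1 = N2.nested y.1)
        (Finset.univ : Finset {x // x ∈ N1.ch u}).val
        (Finset.univ : Finset {y // y ∈ N2.ch v}).val := by
  rw [N1.nested_def u, N2.nested_def v, dif_neg hu, dif_neg hv]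
  refine quot_node_eq_iff.trans ?_
  rw [nested_coe_list, nested_coe_list, Multiset.rel_map]
  constructor
  · exact fun h => h.mono fun x _ y _ hxy => neq_out_iff.mp hxy
  · exact fun h => h.mono fun x _ y _ hxy => neq_out_iff.mpr hxy

theorem nested_leaf_case {N1 N2 : LDag S} {u : N1.V} {v : N2.V}
    (hu : N1.IsLeaf u) (h : N1.nested u = N2.nested v) :
    N2.IsLeaf v ∧ N1.lab u = N2.lab v := by
  rw [N1.nested_def u, N2.nested_def v, dif_pos hu] at h
  by_cases hv : N2.IsLeaf v
  · rw [dif_pos hv] at h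
    exact ⟨hv, quot_leaf_eq_iff.mp h⟩
  · rw [dif_neg hv] at h
    exact absurd h quot_leaf_ne_node

theorem nested_internal_case {N1 N2 : LDag S} {u : N1.V} {v : N2.V}
    (hu : ¬ N1.IsLeaf u) (h : N1.nested u = N2.nested v) : ¬ N2.IsLeaf v := by
  intro hv
  exact hu (nested_leaf_case hv h.symm).1

theorem equivTo_refl (N : LDag S) : ∀ v : N.V, N.equivTo N v v := by
  intro v
  induction v using WellFounded.induction N.acyclic with
  | _ v ih =>
  rw [equivTo_def]
  by_cases hv : N.IsLeaf v
  · exact Or.inl ⟨hv, hv, rfl⟩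
  · exact Or.inr ⟨hv, hv, Equiv.refl _, fun w => ih w.1 w.2⟩

/-- Within one network without duplicate equivalent nodes, `nested` is injective. -/
theorem nested_inj {N : LDag S} (hN : ∀ u v : N.V, N.equivTo N u v → u = v) :
    Function.Injective N.nested := by
  intro u
  induction u using WellFounded.induction N.acyclic with
  | _ u ih =>
  intro v h
  by_cases hu : N.IsLeaf u
  · obtain ⟨hv, hlab⟩ := nested_leaf_case hu h
    exact N.labInj u v hu hv hlab
  · have hv : ¬ N.IsLeaf v := nested_internal_case hu h
    have hrel := (nested_node_eq_iff hu hv).mp h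
    have hrel' : Multiset.Rel (fun (x : {x // x ∈ N.ch u}) (y : {y // y ∈ N.ch v}) =>
        x.1 = y.1) (Finset.univ : Finset {x // x ∈ N.ch u}).val
        (Finset.univ : Finset {y // y ∈ N.ch v}).val :=
      hrel.mono fun x _ y _ hxy => ih x.1 (mem_ch.mp x.2) hxy
    have h2 : ∀ t : Finset N.V, Multiset.map (fun x : {x // x ∈ t} => x.1)
        (Finset.univ : Finset {x // x ∈ t}).val = t.val := by
      intro t
      rw [Finset.univ_eq_attach, Finset.attach_val]
      exact Multiset.attach_map_val _
    have hval : (N.ch u).val = (N.ch v).val := by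
      have h1 := (Multiset.rel_map (f := fun x : {x // x ∈ N.ch u} => x.1)
        (g := fun y : {y // y ∈ N.ch v} => y.1)).mpr hrel'
      rw [Multiset.rel_eq] at h1
      calc (N.ch u).val = _ := (h2 (N.ch u)).symm
        _ = _ := h1
        _ = (N.ch v).val := h2 (N.ch v)
    have hch : ∀ w, N.adj u w ↔ N.adj v w := by
      intro w
      rw [← mem_ch, ← mem_ch, ← Finset.mem_val, ← Finset.mem_val, hval]
    refine hN u v ((equivTo_def N N u v).mpr (Or.inr ⟨hu, hv, ?_, ?_⟩))
    · exact Equiv.subtypeEquivRight hch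
    · exact fun w => N.equivTo_refl w.1

/-- Equivalence implies equal nested labels. -/
theorem nested_congr {N1 N2 : LDag S} : ∀ u : N1.V, ∀ v : N2.V,
    N1.equivTo N2 u v → N1.nested u = N2.nested v := by
  intro u
  induction u using WellFounded.induction N1.acyclic with
  | _ u ih =>
  intro v h
  rcases (equivTo_def N1 N2 u v).mp h with ⟨hu, hv, hlab⟩ | ⟨hu, hv, f, hf⟩
  · rw [N1.nested_def u, N2.nested_def v, dif_pos hu, dif_pos hv, hlab]
  · rw [nested_node_eq_iff hu hv]
    refine rel_univ_of_equiv
      ((((Equiv.subtypeEquivRight fun w => mem_ch).trans f).trans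
        (Equiv.subtypeEquivRight fun w => mem_ch.symm))) fun x => ?_
    have := ih x.1 (mem_ch.mp x.2) _ (hf ((Equiv.subtypeEquivRight fun w => mem_ch) x))
    exact this

/-- Equal nested labels implies equivalence, assuming injectivity on both sides. -/
theorem equivTo_of_nested {N1 N2 : LDag S}
    (inj1 : Function.Injective N1.nested) (inj2 : Function.Injective N2.nested) :
    ∀ u : N1.V, ∀ v : N2.V, N1.nested u = N2.nested v → N1.equivTo N2 u v := by
  intro u
  induction u using WellFounded.induction N1.acyclic with
  | _ u ih =>
  intro v h
  by_cases hu : N1.IsLeaf u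
  · obtain ⟨hv, hlab⟩ := nested_leaf_case hu h
    exact (equivTo_def N1 N2 u v).mpr (Or.inl ⟨hu, hv, hlab⟩)
  · have hv : ¬ N2.IsLeaf v := nested_internal_case hu h
    have hrel := (nested_node_eq_iff hu hv).mp h
    obtain ⟨e, he⟩ := equiv_of_rel hrel
      (fun x x' y hx hx' => Subtype.ext (inj1 (hx.trans hx'.symm)))
      (fun x y y' hy hy' => Subtype.ext (inj2 (hy.symm.trans hy')))
    refine (equivTo_def N1 N2 u v).mpr (Or.inr ⟨hu, hv, ?_, ?_⟩)
    · exact ((Equiv.subtypeEquivRight fun w => mem_ch.symm).trans e).trans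
        (Equiv.subtypeEquivRight fun w => mem_ch)
    · intro w
      exact ih w.1 w.2 _ (he ((Equiv.subtypeEquivRight fun w => mem_ch.symm) w))

end LDag

end AuxProof


namespace LDag

theorem iso_of_equiv {N1 N2 : LDag S} (inj2 : Function.Injective N2.nested)
    (e : N1.V ≃ N2.V) (he : ∀ u, N1.equivTo N2 u (e u)) : N1.IsIso N2 := by
  refine ⟨⟨e, ?_, ?_⟩⟩
  · intro u w
    rcases (equivTo_def N1 N2 u (e u)).mp (he u) with ⟨hu, hv, _⟩ | ⟨hu, hv, f, hf⟩
    · constructor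
      · intro hadj; exact (hv _ hadj).elim
      · intro hadj; exact (hu _ hadj).elim
    · have key : ∀ x : {w // N1.adj u w}, ((f x).1 : N2.V) = e x.1 := by
        intro x
        apply inj2
        exact (nested_congr x.1 (f x).1 (hf x)).symm.trans
          (nested_congr x.1 (e x.1) (he x.1))
      constructor
      · intro hadj
        obtain ⟨x, hx⟩ := f.surjective ⟨e w, hadj⟩
        have hx1 : ((f x).1 : N2.V) = e w := by rw [hx]
        rw [key x] at hx1
        have := e.injective hx1
        exact this ▸ x.2
      · intro hadj
        have h2 := (f ⟨w, hadj⟩).2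
        rwa [key ⟨w, hadj⟩] at h2
  · intro v hv
    rcases (equivTo_def N1 N2 v (e v)).mp (he v) with ⟨_, _, hlab⟩ | ⟨hu, _, _⟩
    · exact hlab.symm
    · exact absurd hv hu

theorem equivTo_of_iso {N1 N2 : LDag S} (e : Iso N1 N2) :
    ∀ u : N1.V, N1.equivTo N2 u (e.toEquiv u) := by
  intro u
  induction u using WellFounded.induction N1.acyclic with
  | _ u ih =>
  by_cases hu : N1.IsLeaf u
  · exact (equivTo_def N1 N2 u _).mpr (Or.inl ⟨hu, e.leaf_map hu, (e.lab_leaf u hu).symm⟩)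
  · have hv : ¬ N2.IsLeaf (e.toEquiv u) := by
      intro hL
      exact hu fun w hw => hL _ ((e.adj_iff u w).mpr hw)
    refine (equivTo_def N1 N2 u _).mpr (Or.inr ⟨hu, hv, ?_, ?_⟩)
    · exact Equiv.subtypeEquiv e.toEquiv fun w => (e.adj_iff u w).symm
    · exact fun w => ih w.1 w.2

end LDag

/-- If neither `S`-DAG contains two distinct equivalent nodes, then their multisets of
equivalence classes (of nested labels, with multiplicities) coincide iff the `S`-DAGs
are isomorphic. -/
theorem upsilon_eq_iff_iso {S : Type} (N1 N2 : SDag S)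
    (h1 : ∀ u v : N1.V, N1.toLDag.equivTo N1.toLDag u v → u = v)
    (h2 : ∀ u v : N2.V, N2.toLDag.equivTo N2.toLDag u v → u = v) :
    N1.toLDag.UpsilonM = N2.toLDag.UpsilonM ↔ N1.toLDag.IsIso N2.toLDag := by
  have inj1 : Function.Injective N1.toLDag.nested := LDag.nested_inj h1
  have inj2 : Function.Injective N2.toLDag.nested := LDag.nested_inj h2
  constructor
  · intro h
    rw [LDag.UpsilonM, LDag.UpsilonM] at h
    have hmem : ∀ u : N1.V, ∃ v : N2.V, N2.toLDag.nested v = N1.toLDag.nested u := by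
      intro u
      have hm : N1.toLDag.nested u ∈ Multiset.map N2.toLDag.nested Finset.univ.val := by
        rw [← h]
        exact Multiset.mem_map_of_mem _ (Finset.mem_univ u)
      obtain ⟨v, _, hv⟩ := Multiset.mem_map.mp hm
      exact ⟨v, hv⟩
    choose F hF using hmem
    have hFinj : Function.Injective F := by
      intro u u' hE
      exact inj1 ((hF u).symm.trans (hE ▸ hF u'))
    have hFsurj : Function.Surjective F := by
      intro v
      have hm : N2.toLDag.nested v ∈ Multiset.map N1.toLDag.nested Finset.univ.val := by
        rw [h]
        exact Multiset.mem_map_of_mem _ (Finset.mem_univ v)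
      obtain ⟨u, _, hu⟩ := Multiset.mem_map.mp hm
      exact ⟨u, inj2 ((hF u).trans hu)⟩
    refine LDag.iso_of_equiv inj2 (Equiv.ofBijective F ⟨hFinj, hFsurj⟩) fun u => ?_
    exact LDag.equivTo_of_nested inj1 inj2 u (F u) (hF u).symm
  · rintro ⟨e⟩
    rw [LDag.UpsilonM, LDag.UpsilonM, ← Multiset.map_univ_val_equiv e.toEquiv,
      Multiset.map_map]
    exact Multiset.map_congr rfl fun u _ =>
      LDag.nested_congr u _ (LDag.equivTo_of_iso e u)
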